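/- Let R be a commutative ring in which 2 is invertible and let n ≥ 2. Every n×n unitriangular matrix A over R whose entries vanish outside the main diagonal and the first superdiagonal is a commutator [B, C] where B² = −I (B is a skew-involution) and C² = I (C is an involution), with B, C upper triangular, assuming R contains an element i with i² = −1. -/

import Mathlib

open Finset

/-- generalized binomial coefficient over ℚ -/
noncomputable def gc (z : ℚ) (k : ℕ) : ℚ := (∏ i ∈ range k, (z - i)) / (k.factorial : ℚ)

lemma gc_zero (z : ℚ) : gc z 0 = 1 := by simp [gc]

lemma gc_absorb (z : ℚ) (k : ℕ) : ((k:ℚ)+1) * gc z (k+1) = (z - k) * gc z k := by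
  rw [gc, gc, prod_range_succ, Nat.factorial_succ]
  have hk : (k.factorial:ℚ) ≠ 0 := by positivity
  have hk1 : ((k:ℚ)+1) ≠ 0 := by positivity
  push_cast
  field_simp

lemma gc_succ (z : ℚ) (k : ℕ) : gc z (k+1) = (z - k) * gc z k / ((k:ℚ)+1) := by
  have hk1 : ((k:ℚ)+1) ≠ 0 := by positivity
  field_simp
  linarith [gc_absorb z k]

lemma gc_vandermonde (k : ℕ) : ∀ a b : ℚ,
    ∑ t ∈ range (k+1), gc a t * gc b (k - t) = gc (a+b) k := by
  induction k with
  | zero => intro a b; simp [gc_zero]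
  | succ k ih =>
    intro a b
    have hk1 : ((k:ℚ)+1) ≠ 0 := by positivity
    apply mul_left_cancel₀ hk1
    have expand : ((k:ℚ)+1) * ∑ t ∈ range (k+2), gc a t * gc b (k+1-t)
        = (∑ t ∈ range (k+2), (t:ℚ) * gc a t * gc b (k+1-t))
        + (∑ t ∈ range (k+2), gc a t * (((k:ℚ)+1-t) * gc b (k+1-t))) := by
      rw [mul_sum, ← sum_add_distrib]
      exact sum_congr rfl (fun t ht => by ring)
    have first : (∑ t ∈ range (k+2), (t:ℚ) * gc a t * gc b (k+1-t))
        = ∑ s ∈ range (k+1), (a - s) * gc a s * gc b (k-s) := by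
      rw [sum_range_succ' (fun t => (t:ℚ) * gc a t * gc b (k+1-t))]
      simp only [Nat.cast_zero, zero_mul, mul_zero, add_zero, Nat.succ_sub_succ]
      apply sum_congr rfl
      intro s hs
      have h1 : ((s:ℚ) + 1) * gc a (s + 1) = (a - s) * gc a s := by
        have := gc_absorb a s; push_cast at this ⊢; linarith [this]
      have h2 : k + 1 - (s+1) = k - s := by omega
      push_cast
      rw [h1]
    have second : (∑ t ∈ range (k+2), gc a t * (((k:ℚ)+1-t) * gc b (k+1-t)))
        = ∑ t ∈ range (k+1), gc a t * ((b - ((k:ℚ)-t)) * gc b (k-t)) := by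
      rw [sum_range_succ]
      push_cast
      rw [show ((k:ℚ) + 1 - ((k:ℚ)+1)) = 0 by ring]
      simp only [zero_mul, mul_zero, add_zero]
      apply sum_congr rfl
      intro t ht
      have ht' : t ≤ k := by simp only [mem_range] at ht; omega
      congr 1
      have h2 : k + 1 - t = (k - t) + 1 := by omega
      rw [h2]
      have habs := gc_absorb b (k - t)
      have hc : (((k - t : ℕ):ℚ)) = (k:ℚ) - t := by
        rw [Nat.cast_sub ht']
      rw [hc] at habs
      rw [show (k:ℚ) + 1 - t = ((k:ℚ) - t) + 1 by ring, habs]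
    rw [expand, first, second]
    have combine : (∑ s ∈ range (k+1), (a - s) * gc a s * gc b (k-s))
        + (∑ t ∈ range (k+1), gc a t * ((b - ((k:ℚ)-t)) * gc b (k-t)))
        = (a + b - k) * ∑ t ∈ range (k+1), gc a t * gc b (k-t) := by
      rw [mul_sum, ← sum_add_distrib]
      exact sum_congr rfl (fun t ht => by ring)
    rw [combine, ih a b, gc_absorb]

lemma gc_reflect (z : ℚ) (k : ℕ) : gc z k = (-1)^k * gc ((k:ℚ) - 1 - z) k := by
  rw [gc, gc]
  have h1 : (∏ i ∈ range k, (((k:ℚ) - 1 - z) - i))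
      = ∏ i ∈ range k, (((k:ℚ)-1-z) - ((k-1-i:ℕ):ℚ)) := by
    exact (prod_range_reflect (fun i => ((k:ℚ)-1-z) - i) k).symm
  have h2 : ∀ i ∈ range k, (((k:ℚ)-1-z) - ((k-1-i:ℕ):ℚ)) = (-1) * (z - i) := by
    intro i hi
    simp only [mem_range] at hi
    have : ((k-1-i:ℕ):ℚ) = (k:ℚ) - 1 - i := by
      have h3 : k - 1 - i = k - (1 + i) := by omega
      rw [h3, Nat.cast_sub (by omega)]
      push_cast; ring
    rw [this]; ring
  rw [h1, prod_congr rfl h2, prod_mul_distrib, prod_const, card_range]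
  rw [mul_div_assoc', ← mul_assoc, ← mul_pow]
  norm_num

lemma gc_zero_left (k : ℕ) : gc 0 k = if k = 0 then 1 else 0 := by
  cases k with
  | zero => simp [gc_zero]
  | succ k =>
    simp only [Nat.succ_ne_zero, if_false, gc]
    rw [prod_range_succ']
    simp

lemma gc_one_left (k : ℕ) : gc 1 k = if k = 0 then 1 else if k = 1 then 1 else 0 := by
  match k with
  | 0 => simp [gc_zero]
  | 1 => norm_num [gc, prod_range_succ]
  | (k+2) =>
    simp only [show k+2 ≠ 0 by omega, show k+2 ≠ 1 by omega, if_false, gc]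
    rw [prod_range_succ', prod_range_succ']
    simp

lemma gc_natCast (r : ℕ) (k : ℕ) : gc (r:ℚ) k = (r.choose k : ℚ) := by
  induction k with
  | zero => simp [gc_zero]
  | succ k ih =>
    rw [gc_succ, ih]
    by_cases h : k < r
    · have habs : (r.choose (k+1) : ℚ) * ((k:ℚ)+1) = (r.choose k : ℚ) * ((r:ℚ) - k) := by
        have := Nat.choose_succ_right_eq r k
        have hcast := congrArg (fun x : ℕ => (x:ℚ)) this
        push_cast at hcast
        rw [Nat.cast_sub (le_of_lt h)] at hcast
        linarith [hcast]
      have hk1 : ((k:ℚ)+1) ≠ 0 := by positivity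
      field_simp
      linarith [habs]
    · push_neg at h
      rw [Nat.choose_eq_zero_of_lt (show r < k + 1 by omega)]
      by_cases hrk : r = k
      · subst hrk; push_cast; ring
      · rw [Nat.choose_eq_zero_of_lt (show r < k by omega)]
        push_cast; ring

lemma gc_neg_half (k : ℕ) : gc (-(1/2)) k = (-(1/4))^k * (Nat.centralBinom k : ℚ) := by
  induction k with
  | zero => simp [gc_zero, Nat.centralBinom_zero]
  | succ k ih =>
    rw [gc_succ, ih]
    have hrec := Nat.succ_mul_centralBinom_succ k
    have hcast := congrArg (fun x : ℕ => (x:ℚ)) hrec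
    push_cast at hcast
    have hk1 : ((k:ℚ)+1) ≠ 0 := by positivity
    have hcb : (((k+1).centralBinom : ℕ):ℚ) = 2*(2*(k:ℚ)+1)*(k.centralBinom:ℚ)/((k:ℚ)+1) := by
      field_simp
      linarith [hcast]
    rw [pow_succ, hcb]
    field_simp
    ring

lemma gc_mixed (z z' : ℚ) (k : ℕ) :
    ∑ t ∈ range (k+1), (-1)^t * gc z t * gc (z' - t) (k - t) = gc (z' - z) k := by
  have step : ∀ t ∈ range (k+1),
      (-1)^t * gc z t * gc (z' - t) (k - t) = (-1)^k * (gc z t * gc ((k:ℚ) - 1 - z') (k - t)) := by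
    intro t ht
    simp only [mem_range] at ht
    have ht' : t ≤ k := by omega
    have hre := gc_reflect (z' - (t:ℚ)) (k - t)
    have hcast : ((k - t : ℕ):ℚ) = (k:ℚ) - t := by rw [Nat.cast_sub ht']
    rw [hcast] at hre
    rw [show (k:ℚ) - (t:ℚ) - 1 - (z' - t) = (k:ℚ) - 1 - z' by ring] at hre
    rw [hre]
    have : ((-1:ℚ))^t * ((-1:ℚ))^(k-t) = (-1)^k := by
      rw [← pow_add]
      congr 1
      omega
    calc (-1)^t * gc z t * ((-1) ^ (k - t) * gc ((k:ℚ) - 1 - z') (k - t))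
        = ((-1:ℚ))^t * ((-1:ℚ))^(k-t) * (gc z t * gc ((k:ℚ) - 1 - z') (k - t)) := by ring
      _ = (-1)^k * (gc z t * gc ((k:ℚ) - 1 - z') (k - t)) := by rw [this]
  rw [sum_congr rfl step, ← mul_sum, gc_vandermonde]
  rw [show z + ((k:ℚ) - 1 - z') = (k:ℚ) - 1 - (z' - z) by ring]
  rw [← gc_reflect]

/-- integer-valued generalized binomial for integer argument -/
def ic (r : ℤ) (k : ℕ) : ℤ :=
  if 0 ≤ r then (r.toNat.choose k : ℤ) else (-1)^k * (((k : ℤ) - 1 - r).toNat.choose k : ℤ)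

lemma ic_cast (r : ℤ) (k : ℕ) : ((ic r k : ℤ) : ℚ) = gc (r : ℚ) k := by
  rw [ic]
  by_cases h : 0 ≤ r
  · rw [if_pos h]
    have : ((r:ℚ)) = ((r.toNat : ℕ) : ℚ) := by
      norm_cast
      omega
    rw [this, gc_natCast]
    push_cast
    ring
  · rw [if_neg h]
    push_neg at h
    have h2 : (0:ℤ) ≤ (k : ℤ) - 1 - r := by omega
    have h3' : ((((k : ℤ) - 1 - r).toNat : ℕ) : ℤ) = (k:ℤ) - 1 - r := Int.toNat_of_nonneg h2
    have h3 : ((((k : ℤ) - 1 - r).toNat : ℕ) : ℚ) = (k:ℚ) - 1 - r := by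
      exact_mod_cast congrArg (fun x : ℤ => (x:ℚ)) h3'
    rw [gc_reflect (r:ℚ) k, ← h3, gc_natCast]
    push_cast
    try ring

/-- 4^k * gc (r - 1/2) k as an integer -/
def Yc (r : ℤ) (k : ℕ) : ℤ :=
  ∑ t ∈ range (k+1), ic r t * 4^t * (-1)^(k-t) * (Nat.centralBinom (k-t) : ℤ)

lemma Yc_cast (r : ℤ) (k : ℕ) : ((Yc r k : ℤ) : ℚ) = 4^k * gc ((r:ℚ) - 1/2) k := by
  rw [Yc]
  push_cast
  have step : ∀ t ∈ range (k+1),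
      ((ic r t : ℤ):ℚ) * 4^t * (-1)^(k-t) * (Nat.centralBinom (k-t) : ℚ)
      = 4^k * (gc (r:ℚ) t * gc (-(1/2)) (k - t)) := by
    intro t ht
    simp only [mem_range] at ht
    have ht' : t ≤ k := by omega
    rw [ic_cast, gc_neg_half]
    have h4 : ((4:ℚ))^t * (4:ℚ)^(k-t) = 4^k := by
      rw [← pow_add]; congr 1; omega
    have hneg : ((-(1/4):ℚ))^(k-t) = (-1)^(k-t) * (1/4)^(k-t) := by
      rw [neg_pow]
    rw [hneg]
    have h14 : ((1/4:ℚ))^(k-t) = 1/(4^(k-t)) := by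
      rw [div_pow]; norm_num
    rw [h14]
    have h4kt : ((4:ℚ))^(k-t) ≠ 0 := by positivity
    field_simp
    rw [← h4]
    ring
  rw [sum_congr rfl step, ← mul_sum, gc_vandermonde]
  congr 1
  ring

lemma Z_CC (r : ℤ) (k : ℕ) :
    ∑ t ∈ range (k+1), (-1)^t * ic r t * ic (r - t) (k - t) = if k = 0 then 1 else 0 := by
  apply (Int.cast_injective (α := ℚ))
  push_cast
  have step : ∀ t ∈ range (k+1),
      ((-1:ℚ))^t * ((ic r t : ℤ):ℚ) * ((ic (r - t) (k-t) : ℤ):ℚ)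
      = (-1)^t * gc (r:ℚ) t * gc ((r:ℚ) - t) (k - t) := by
    intro t ht
    rw [ic_cast, ic_cast]
    push_cast
    ring
  rw [sum_congr rfl step, gc_mixed]
  try rw [show ((r:ℚ) - r) = 0 by ring, gc_zero_left]
  try simp
  try (by_cases hk : k = 0 <;> simp [hk])

lemma Z_EE (r : ℤ) (k : ℕ) :
    ∑ t ∈ range (k+1), (-1)^t * Yc r t * Yc (r - t) (k - t) = if k = 0 then 1 else 0 := by
  apply (Int.cast_injective (α := ℚ))
  push_cast
  have step : ∀ t ∈ range (k+1),
      ((-1:ℚ))^t * ((Yc r t : ℤ):ℚ) * ((Yc (r - t) (k-t) : ℤ):ℚ)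
      = 4^k * ((-1)^t * gc ((r:ℚ) - 1/2) t * gc (((r:ℚ) - 1/2) - t) (k - t)) := by
    intro t ht
    simp only [mem_range] at ht
    have ht' : t ≤ k := by omega
    rw [Yc_cast, Yc_cast]
    have h4 : ((4:ℚ))^t * (4:ℚ)^(k-t) = 4^k := by
      rw [← pow_add]; congr 1; omega
    push_cast
    rw [show ((r:ℚ) - t - 1/2) = ((r:ℚ) - 1/2) - t by ring]
    rw [← h4]
    ring
  rw [sum_congr rfl step, ← mul_sum, gc_mixed]
  rw [show ((r:ℚ) - 1/2 - ((r:ℚ) - 1/2)) = 0 by ring, gc_zero_left]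
  by_cases hk : k = 0 <;> simp [hk]

lemma Z_EC (r : ℤ) (k : ℕ) :
    ∑ t ∈ range (k+1), (-1)^t * Yc r t * 4^(k-t) * ic (r - t) (k - t) = Yc 1 k := by
  apply (Int.cast_injective (α := ℚ))
  push_cast
  have step : ∀ t ∈ range (k+1),
      ((-1:ℚ))^t * ((Yc r t : ℤ):ℚ) * 4^(k-t) * ((ic (r - t) (k-t) : ℤ):ℚ)
      = 4^k * ((-1)^t * gc ((r:ℚ) - 1/2) t * gc (((r:ℚ)) - t) (k - t)) := by
    intro t ht
    simp only [mem_range] at ht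
    have ht' : t ≤ k := by omega
    rw [Yc_cast, ic_cast]
    have h4 : ((4:ℚ))^t * (4:ℚ)^(k-t) = 4^k := by
      rw [← pow_add]; congr 1; omega
    push_cast
    rw [← h4]
    ring
  rw [sum_congr rfl step, ← mul_sum, gc_mixed, Yc_cast]
  try rw [show ((r:ℚ) - ((r:ℚ) - 1/2)) = ((1:ℤ):ℚ) - 1/2 by push_cast; ring]
  try norm_num

lemma Z_DD (k : ℕ) :
    ∑ t ∈ range (k+1), Yc 1 t * Yc 1 (k - t) = if k = 0 then 1 else if k = 1 then 4 else 0 := by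
  apply (Int.cast_injective (α := ℚ))
  push_cast
  have step : ∀ t ∈ range (k+1),
      ((Yc 1 t : ℤ):ℚ) * ((Yc 1 (k-t) : ℤ):ℚ)
      = 4^k * (gc (1/2) t * gc (1/2) (k - t)) := by
    intro t ht
    simp only [mem_range] at ht
    have ht' : t ≤ k := by omega
    rw [Yc_cast, Yc_cast]
    have h4 : ((4:ℚ))^t * (4:ℚ)^(k-t) = 4^k := by
      rw [← pow_add]; congr 1; omega
    push_cast
    rw [show ((1:ℚ) - 1/2) = 1/2 by norm_num, ← h4]
    ring
  rw [sum_congr rfl step, ← mul_sum, gc_vandermonde]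
  rw [show ((1:ℚ)/2 + 1/2) = 1 by norm_num, gc_one_left]
  rcases Nat.lt_or_ge k 2 with h | h
  · interval_cases k <;> norm_num
  · rw [if_neg (by omega), if_neg (by omega), if_neg (by omega), if_neg (by omega)]
    ring

section TriMat

variable {R : Type*} [CommRing R] {n : ℕ}

/-- product of consecutive superdiagonal entries -/
def mp (a : ℕ → R) (i j : ℕ) : R := ∏ t ∈ Finset.Ico i j, a t

lemma mp_refl (a : ℕ → R) (i : ℕ) : mp a i i = 1 := by simp [mp]

lemma mp_mul (a : ℕ → R) {i l j : ℕ} (h1 : i ≤ l) (h2 : l ≤ j) :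
    mp a i l * mp a l j = mp a i j := by
  rw [mp, mp, mp, Finset.prod_Ico_consecutive _ h1 h2]

/-- upper triangular matrix with entries c(row, distance) * product of a's -/
def tri (a : ℕ → R) (c : ℕ → ℕ → R) : Matrix (Fin n) (Fin n) R :=
  Matrix.of fun i j => if (i:ℕ) ≤ (j:ℕ) then c i ((j:ℕ) - i) * mp a i j else 0

lemma tri_mul_tri (a : ℕ → R) (c d : ℕ → ℕ → R) :
    (tri a c : Matrix (Fin n) (Fin n) R) * tri a d
      = tri a (fun i k => ∑ t ∈ range (k+1), c i t * d (i+t) (k-t)) := by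
  ext i j
  rw [Matrix.mul_apply]
  simp only [tri, Matrix.of_apply]
  set G : ℕ → R := fun l =>
    (if (i:ℕ) ≤ l then c i (l - i) * mp a i l else 0) *
    (if l ≤ (j:ℕ) then d l ((j:ℕ) - l) * mp a l j else 0) with hG
  have hsum : ∑ l : Fin n, (if (i:ℕ) ≤ (l:ℕ) then c i ((l:ℕ) - i) * mp a i l else 0) *
      (if (l:ℕ) ≤ (j:ℕ) then d l ((j:ℕ) - l) * mp a l j else 0) = ∑ l ∈ range n, G l := by
    exact Fin.sum_univ_eq_sum_range (fun l => G l) n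
  rw [hsum]
  by_cases hij : (i:ℕ) ≤ (j:ℕ)
  · rw [if_pos hij]
    have hjn : (j:ℕ) < n := j.isLt
    have hsub : Finset.Icc (i:ℕ) (j:ℕ) ⊆ range n := by
      intro l hl
      simp only [Finset.mem_Icc] at hl
      simp only [mem_range]
      omega
    have hvan : ∀ l ∈ range n, l ∉ Finset.Icc (i:ℕ) (j:ℕ) → G l = 0 := by
      intro l _ hl
      simp only [Finset.mem_Icc, not_and_or, not_le] at hl
      rcases hl with h | h
      · rw [hG]; simp only; rw [if_neg (not_le.mpr h), zero_mul]
      · rw [hG]; simp only; rw [if_neg (not_le.mpr h), mul_zero]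
    rw [← Finset.sum_subset hsub hvan]
    rw [show Finset.Icc (i:ℕ) (j:ℕ) = Finset.Ico (i:ℕ) ((j:ℕ)+1) from (Finset.Ico_add_one_right_eq_Icc _ _).symm]
    rw [Finset.sum_Ico_eq_sum_range]
    have hlen : (j:ℕ) + 1 - i = ((j:ℕ) - i) + 1 := by omega
    rw [hlen]
    rw [Finset.sum_mul]
    apply sum_congr rfl
    intro t ht
    simp only [mem_range] at ht
    have ht' : t ≤ (j:ℕ) - i := by omega
    rw [hG]
    simp only
    rw [if_pos (by omega), if_pos (by omega)]
    have e1 : (i:ℕ) + t - i = t := by omega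
    have e2 : (j:ℕ) - ((i:ℕ) + t) = ((j:ℕ) - i) - t := by omega
    rw [e1, e2]
    rw [show c i t * mp a i (i+t) * (d (i+t) ((j:ℕ)-i-t) * mp a (i+t) j)
        = c i t * d (i+t) ((j:ℕ)-i-t) * (mp a i (i+t) * mp a (i+t) j) by ring]
    rw [mp_mul a (by omega) (by omega)]
  · rw [if_neg hij]
    apply Finset.sum_eq_zero
    intro l _
    rw [hG]
    simp only
    rw [not_le] at hij
    by_cases h1 : (i:ℕ) ≤ l
    · rw [if_neg (show ¬ ((l:ℕ) ≤ (j:ℕ)) by omega), mul_zero]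
    · rw [if_neg h1, zero_mul]

lemma tri_one (a : ℕ → R) :
    (tri a (fun _ k => if k = 0 then (1:R) else 0) : Matrix (Fin n) (Fin n) R) = 1 := by
  ext i j
  simp only [tri, Matrix.of_apply]
  by_cases hij : i = j
  · subst hij
    rw [if_pos (le_refl _), Nat.sub_self, if_pos rfl, mp_refl, Matrix.one_apply_eq, one_mul]
  · rw [Matrix.one_apply_ne hij]
    by_cases h : (i:ℕ) ≤ (j:ℕ)
    · rw [if_pos h, if_neg (by
        intro hk
        exact hij (Fin.ext (by omega))), zero_mul]
    · rw [if_neg h]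

lemma tri_blockTriangular (a : ℕ → R) (c : ℕ → ℕ → R) :
    (tri a c : Matrix (Fin n) (Fin n) R).BlockTriangular id := by
  intro i j hij
  simp only [id_eq] at hij
  simp only [tri, Matrix.of_apply]
  rw [if_neg (by exact not_le.mpr hij)]

end TriMat

theorem stmt_10 {R : Type*} [CommRing R] [Invertible (2 : R)]
    (ι : R) (hι : ι * ι = -1) (n : ℕ) (hn : 2 ≤ n)
    (A : Matrix (Fin n) (Fin n) R)
    (hdiag : ∀ i, A i i = 1)
    (hsupp : ∀ i j : Fin n, j.val ≠ i.val → j.val ≠ i.val + 1 → A i j = 0) :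
    ∃ B C : Matrix (Fin n) (Fin n) R,
      B * B = -1 ∧ C * C = 1 ∧
      B.BlockTriangular id ∧ C.BlockTriangular id ∧
      A = B * C * B⁻¹ * C⁻¹ := by
  classical
  set h2 : R := ⅟(2:R) with hh2
  set a : ℕ → R := fun t => if ht : t + 1 < n then A ⟨t, by omega⟩ ⟨t+1, ht⟩ else 0 with ha
  set cC : ℕ → ℕ → R := fun i k => (-1:R)^i * (((ic ((n:ℤ) - 2 - (i:ℕ)) k) : ℤ) : R) with hcC
  set cE : ℕ → ℕ → R := fun i k =>
    (-1:R)^i * (((Yc ((n:ℤ) - 2 - (i:ℕ)) k) : ℤ) : R) * h2^(2*k) with hcE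
  set cD : ℕ → ℕ → R := fun _ k => (((Yc 1 k) : ℤ) : R) * h2^(2*k) with hcD
  set C : Matrix (Fin n) (Fin n) R := tri a cC with hC
  set E : Matrix (Fin n) (Fin n) R := tri a cE with hE
  set D : Matrix (Fin n) (Fin n) R := tri a cD with hD
  -- power juggling lemma
  have hpow : ∀ t k : ℕ, t ≤ k → h2^(2*t) * ((2:R)^(2*(k-t)) * h2^(2*(k-t))) = h2^(2*t) := by
    intro t k htk
    have : (2:R)^(2*(k-t)) * h2^(2*(k-t)) = 1 := by
      rw [hh2, ← mul_pow, mul_invOf_self, one_pow]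
    rw [this, mul_one]
  have hpow2 : ∀ t k : ℕ, t ≤ k → h2^(2*t) = h2^(2*k) * (2:R)^(2*(k-t)) := by
    intro t k htk
    have expand : h2^(2*t) * ((2:R)^(2*(k-t)) * h2^(2*(k-t))) = h2^(2*t) := hpow t k htk
    calc h2^(2*t) = h2^(2*t) * ((2:R)^(2*(k-t)) * h2^(2*(k-t))) := expand.symm
      _ = h2^(2*t) * h2^(2*(k-t)) * (2:R)^(2*(k-t)) := by ring
      _ = h2^(2*k) * (2:R)^(2*(k-t)) := by
          rw [← pow_add]
          congr 2
          omega
  have hsign : ∀ i t : ℕ, (-1:R)^i * (-1:R)^(i+t) = (-1:R)^t := by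
    intro i t
    rw [pow_add, ← mul_assoc, ← mul_pow]
    norm_num
  -- C * C = 1
  have hCC : C * C = 1 := by
    rw [hC, tri_mul_tri]
    have : (fun (i k : ℕ) => ∑ t ∈ range (k+1), cC i t * cC (i+t) (k-t))
        = (fun (_ k : ℕ) => if k = 0 then (1:R) else 0) := by
      funext i k
      set r : ℤ := (n:ℤ) - 2 - (i:ℕ) with hr
      have key := Z_CC r k
      have keyR := congrArg (fun z : ℤ => (z : R)) key
      push_cast at keyR
      rw [← keyR]
      apply sum_congr rfl
      intro t ht
      rw [hcC]
      simp only
      have harg : (n:ℤ) - 2 - ((i + t : ℕ):ℤ) = r - t := by push_cast; ring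
      rw [harg]
      push_cast
      rw [show (-1:R)^i * ((ic r t : ℤ):R) * ((-1:R)^(i+t) * ((ic (r - t) (k-t) : ℤ):R))
          = ((-1:R)^i * (-1:R)^(i+t)) * (((ic r t : ℤ):R) * ((ic (r - t) (k-t) : ℤ):R)) by ring]
      rw [hsign]
      ring
    rw [this, tri_one]
  -- E * E = 1
  have hEE : E * E = 1 := by
    rw [hE, tri_mul_tri]
    have : (fun (i k : ℕ) => ∑ t ∈ range (k+1), cE i t * cE (i+t) (k-t))
        = (fun (_ k : ℕ) => if k = 0 then (1:R) else 0) := by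
      funext i k
      set r : ℤ := (n:ℤ) - 2 - (i:ℕ) with hr
      have key := Z_EE r k
      have keyR := congrArg (fun z : ℤ => (z : R)) key
      push_cast at keyR
      have step : ∀ t ∈ range (k+1), cE i t * cE (i+t) (k-t)
          = ((-1:R)^t * ((Yc r t : ℤ):R) * ((Yc (r - t) (k-t) : ℤ):R)) * h2^(2*k) := by
        intro t ht
        simp only [mem_range] at ht
        have ht' : t ≤ k := by omega
        rw [hcE]
        simp only
        have harg : (n:ℤ) - 2 - ((i + t : ℕ):ℤ) = r - t := by push_cast; ring
        rw [harg]
        have hpw : h2^(2*t) * h2^(2*(k-t)) = h2^(2*k) := by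
          rw [← pow_add]; congr 1; omega
        calc (-1:R)^i * ((Yc r t : ℤ):R) * h2^(2*t)
              * ((-1:R)^(i+t) * ((Yc (r - t) (k-t) : ℤ):R) * h2^(2*(k-t)))
            = ((-1:R)^i * (-1:R)^(i+t)) * (((Yc r t : ℤ):R) * ((Yc (r - t) (k-t) : ℤ):R))
              * (h2^(2*t) * h2^(2*(k-t))) := by ring
          _ = ((-1:R)^t * ((Yc r t : ℤ):R) * ((Yc (r - t) (k-t) : ℤ):R)) * h2^(2*k) := by
              rw [hsign, hpw]; ring
      rw [sum_congr rfl step, ← sum_mul, keyR]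
      by_cases hk : k = 0 <;> simp [hk]
    rw [this, tri_one]
  -- E * C = D
  have hEC : E * C = D := by
    rw [hE, hC, hD, tri_mul_tri]
    have hcoefEC : (fun (i k : ℕ) => ∑ t ∈ range (k+1), cE i t * cC (i+t) (k-t)) = cD := by
      funext i k
      set r : ℤ := (n:ℤ) - 2 - (i:ℕ) with hr
      have key := Z_EC r k
      have keyR := congrArg (fun z : ℤ => (z : R)) key
      push_cast at keyR
      have step : ∀ t ∈ range (k+1), cE i t * cC (i+t) (k-t)
          = ((-1:R)^t * ((Yc r t : ℤ):R) * ((2:R)^(2*(k-t)) * ((ic (r - t) (k-t) : ℤ):R))) * h2^(2*k) := by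
        intro t ht
        simp only [mem_range] at ht
        have ht' : t ≤ k := by omega
        rw [hcE, hcC]
        simp only
        have harg : (n:ℤ) - 2 - ((i + t : ℕ):ℤ) = r - t := by push_cast; ring
        rw [harg]
        rw [hpow2 t k ht']
        calc (-1:R)^i * ((Yc r t : ℤ):R) * (h2^(2*k) * (2:R)^(2*(k-t)))
              * ((-1:R)^(i+t) * ((ic (r - t) (k-t) : ℤ):R))
            = ((-1:R)^i * (-1:R)^(i+t)) * (((Yc r t : ℤ):R)
              * ((2:R)^(2*(k-t)) * ((ic (r - t) (k-t) : ℤ):R))) * h2^(2*k) := by ring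
          _ = ((-1:R)^t * ((Yc r t : ℤ):R) * ((2:R)^(2*(k-t)) * ((ic (r - t) (k-t) : ℤ):R))) * h2^(2*k) := by
              rw [hsign]; ring
      rw [sum_congr rfl step, ← sum_mul]
      rw [hcD]
      simp only
      congr 1
      rw [← keyR]
      apply sum_congr rfl
      intro t ht
      rw [show ((2:R))^(2*(k-t)) = (((4:ℤ)^(k-t) : ℤ):R) by push_cast; rw [pow_mul]; norm_num]
      push_cast
      ring
    rw [hcoefEC]
  -- D * D = A
  have hDD : D * D = A := by
    rw [hD, tri_mul_tri]
    have hcoef : (fun (i k : ℕ) => ∑ t ∈ range (k+1), cD i t * cD (i+t) (k-t))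
        = (fun (_ k : ℕ) => if k = 0 then (1:R) else if k = 1 then 1 else 0) := by
      funext i k
      have key := Z_DD k
      have keyR := congrArg (fun z : ℤ => (z : R)) key
      push_cast at keyR
      have step : ∀ t ∈ range (k+1), cD i t * cD (i+t) (k-t)
          = (((Yc 1 t : ℤ):R) * ((Yc 1 (k-t) : ℤ):R)) * h2^(2*k) := by
        intro t ht
        simp only [mem_range] at ht
        have ht' : t ≤ k := by omega
        rw [hcD]
        simp only
        have hpw : h2^(2*t) * h2^(2*(k-t)) = h2^(2*k) := by
          rw [← pow_add]; congr 1; omega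
        calc ((Yc 1 t : ℤ):R) * h2^(2*t) * (((Yc 1 (k-t) : ℤ):R) * h2^(2*(k-t)))
            = (((Yc 1 t : ℤ):R) * ((Yc 1 (k-t) : ℤ):R)) * (h2^(2*t) * h2^(2*(k-t))) := by ring
          _ = (((Yc 1 t : ℤ):R) * ((Yc 1 (k-t) : ℤ):R)) * h2^(2*k) := by rw [hpw]
      rw [sum_congr rfl step, ← sum_mul, keyR]
      by_cases hk0 : k = 0
      · simp [hk0]
      by_cases hk1 : k = 1
      · subst hk1
        have h41 : ((4:R)) * h2^(2*1) = 1 := by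
          rw [hh2]
          have h42 : ((4:R)) = (2:R)^(2*1) := by norm_num
          rw [h42, ← mul_pow, mul_invOf_self, one_pow]
        simp only [one_ne_zero, if_false, if_true, if_pos rfl]
        convert h41 using 2 <;> norm_num
      · simp [hk0, hk1]
    rw [hcoef]
    symm
    ext i j
    simp only [tri, Matrix.of_apply]
    by_cases hij : (i:ℕ) ≤ (j:ℕ)
    · rw [if_pos hij]
      by_cases hk0 : (j:ℕ) - (i:ℕ) = 0
      · have : i = j := Fin.ext (by omega)
        subst this
        rw [hk0, if_pos rfl, mp_refl, mul_one]
        exact hdiag i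
      by_cases hk1 : (j:ℕ) - (i:ℕ) = 1
      · rw [hk1, if_neg (by norm_num), if_pos rfl, one_mul]
        have hj : (j:ℕ) = (i:ℕ) + 1 := by omega
        have hmp : mp a (i:ℕ) (j:ℕ) = a (i:ℕ) := by
          rw [mp, hj, Nat.Ico_succ_singleton, Finset.prod_singleton]
        rw [hmp, ha]
        simp only
        have hlt : (i:ℕ) + 1 < n := by omega
        rw [dif_pos hlt]
        congr 1 <;> exact Fin.ext (by simp [hj])
      · rw [if_neg hk0, if_neg hk1, zero_mul]
        exact hsupp i j (by omega) (by omega)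
    · rw [if_neg hij]
      exact hsupp i j (by omega) (by omega)
  -- assemble
  refine ⟨ι • E, C, ?_, hCC, ?_, ?_, ?_⟩
  · rw [Matrix.smul_mul, Matrix.mul_smul, smul_smul, hEE, hι]
    simp
  · intro i j hij
    simp only [id_eq] at hij
    have := tri_blockTriangular a cE hij
    rw [← hE] at this
    simp [this]
  · exact tri_blockTriangular a cC
  · have hB2 : (ι • E) * (ι • E) = -1 := by
      rw [Matrix.smul_mul, Matrix.mul_smul, smul_smul, hEE, hι]
      simp
    have hBinv : (ι • E)⁻¹ = -(ι • E) := by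
      apply Matrix.inv_eq_right_inv
      rw [mul_neg, hB2, neg_neg]
    have hCinv : C⁻¹ = C := Matrix.inv_eq_right_inv hCC
    rw [hBinv, hCinv]
    calc A = D * D := hDD.symm
      _ = D * (E * C) := by rw [hEC]
      _ = (D * E) * C := by rw [mul_assoc]
      _ = (ι • E) * C * -(ι • E) * C := by
          rw [Matrix.smul_mul, Matrix.mul_neg, Matrix.mul_smul, Matrix.smul_mul]
          rw [smul_smul, hι]
          rw [show (E * C * E) = D * E by rw [hEC]]
          simp
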